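/- Let a₊, a₋ > 0 and γ ∈ ℝ \ {-1}. Define I₁(ρ) = ∫_{a₊(ρ+1)/(a₊+a₋)}^{1} |a₊ - a₊ξ|^{-1/2} |ξ|^{-γ/(γ+1)} dξ and I₂(ρ) = ∫_{a₊/a₋}^{(a₊/(a₊+a₋))·(ρ+1)/ρ} |a₋ξ - a₊|^{-1/2} |ξ|^{-γ/(γ+1)} dξ. Then on the interval of definition the identity I₂'(ρ) = ρ^{-(γ+3)/(2(γ+1))} · I₁'(ρ) holds. -/

import Mathlib

open Set MeasureTheory intervalIntegral

/-- the identity `I₂'(ρ) = ρ^{-(γ+3)/(2(γ+1))} I₁'(ρ)`. -/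
theorem stmt_1 (ap am γ : ℝ) (hap : 0 < ap) (ham : 0 < am) (hγ : γ ≠ -1)
    (I₁ I₂ : ℝ → ℝ)
    (hI₁ : ∀ ρ : ℝ, I₁ ρ =
      ∫ ξ in (ap * (ρ + 1) / (ap + am))..1,
        |ap - ap * ξ| ^ (-(1 : ℝ) / 2) * |ξ| ^ (-(γ / (γ + 1))))
    (hI₂ : ∀ ρ : ℝ, I₂ ρ =
      ∫ ξ in (ap / am)..(ap / (ap + am) * ((ρ + 1) / ρ)),
        |am * ξ - ap| ^ (-(1 : ℝ) / 2) * |ξ| ^ (-(γ / (γ + 1))))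
    (ρ : ℝ)
    (hρ : (-1 < γ ∧ ρ ∈ Ioo 0 (am / ap)) ∨ (γ < -1 ∧ ρ ∈ Ioi (am / ap)))
    (hint₁ : ∀ s : ℝ,
      ((-1 < γ ∧ s ∈ Ioo 0 (am / ap)) ∨ (γ < -1 ∧ s ∈ Ioi (am / ap))) →
      IntervalIntegrable
        (fun ξ : ℝ => |ap - ap * ξ| ^ (-(1 : ℝ) / 2) * |ξ| ^ (-(γ / (γ + 1))))
        volume (ap * (s + 1) / (ap + am)) 1)
    (hint₂ : ∀ s : ℝ,
      ((-1 < γ ∧ s ∈ Ioo 0 (am / ap)) ∨ (γ < -1 ∧ s ∈ Ioi (am / ap))) →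
      IntervalIntegrable
        (fun ξ : ℝ => |am * ξ - ap| ^ (-(1 : ℝ) / 2) * |ξ| ^ (-(γ / (γ + 1))))
        volume (ap / am) (ap / (ap + am) * ((s + 1) / s))) :
    deriv I₂ ρ = ρ ^ (-((γ + 3) / (2 * (γ + 1)))) * deriv I₁ ρ := by
  have hγ1 : γ + 1 ≠ 0 := fun h => hγ (by linarith)
  have hsum : (0:ℝ) < ap + am := by linarith
  have hρpos : 0 < ρ := by
    rcases hρ with ⟨_, h⟩ | ⟨_, h⟩
    · exact h.1
    · exact lt_trans (div_pos ham hap) h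
  have hρne : am - ap * ρ ≠ 0 := by
    rcases hρ with ⟨_, h⟩ | ⟨_, h⟩
    · have := (lt_div_iff₀ hap).mp h.2
      nlinarith
    · have := (div_lt_iff₀ hap).mp h
      nlinarith
  set x₁ : ℝ := ap * (ρ + 1) / (ap + am) with hx₁def
  set x₂ : ℝ := ap / (ap + am) * ((ρ + 1) / ρ) with hx₂def
  have hx₁pos : 0 < x₁ := by
    apply div_pos (by nlinarith) hsum
  have hA : ap - ap * x₁ = ap * (am - ap * ρ) / (ap + am) := by
    rw [hx₁def]; field_simp; try ring
  have hAne : ap - ap * x₁ ≠ 0 := by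
    rw [hA]
    exact div_ne_zero (mul_ne_zero hap.ne' hρne) hsum.ne'
  have hx2 : x₂ = x₁ / ρ := by
    rw [hx₁def, hx₂def]; field_simp; try ring
  have hx₂pos : 0 < x₂ := by rw [hx2]; exact div_pos hx₁pos hρpos
  have hB : am * x₂ - ap = (ap - ap * x₁) / ρ := by
    rw [hx₁def, hx₂def]; field_simp; try ring
  have hBne : am * x₂ - ap ≠ 0 := by
    rw [hB]; exact div_ne_zero hAne hρpos.ne'
  -- derivative of I₁
  have hmeas1 : StronglyMeasurableAtFilter
      (fun ξ : ℝ => |ap - ap * ξ| ^ (-(1 : ℝ) / 2) * |ξ| ^ (-(γ / (γ + 1)))) (nhds x₁) volume :=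
    (Measurable.stronglyMeasurable (by fun_prop)).stronglyMeasurableAtFilter
  have hcont1 : ContinuousAt
      (fun ξ : ℝ => |ap - ap * ξ| ^ (-(1 : ℝ) / 2) * |ξ| ^ (-(γ / (γ + 1)))) x₁ := by
    apply ContinuousAt.mul
    · exact ContinuousAt.rpow_const (by fun_prop) (Or.inl (by simpa [abs_ne_zero] using hAne))
    · exact ContinuousAt.rpow_const (by fun_prop) (Or.inl (by simp [abs_ne_zero, hx₁pos.ne']))
  have hF₁ : HasDerivAt
      (fun u : ℝ => ∫ ξ in u..1, |ap - ap * ξ| ^ (-(1 : ℝ) / 2) * |ξ| ^ (-(γ / (γ + 1))))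
      (-(|ap - ap * x₁| ^ (-(1 : ℝ) / 2) * |x₁| ^ (-(γ / (γ + 1))))) x₁ :=
    integral_hasDerivAt_left (hint₁ ρ hρ) hmeas1 hcont1
  have hg₁ : HasDerivAt (fun s : ℝ => ap * (s + 1) / (ap + am)) (ap / (ap + am)) ρ := by
    have := (((hasDerivAt_id ρ).add_const 1).const_mul ap).div_const (ap + am)
    simpa using this
  have hI₁eq : I₁ = (fun u : ℝ => ∫ ξ in u..1,
      |ap - ap * ξ| ^ (-(1 : ℝ) / 2) * |ξ| ^ (-(γ / (γ + 1)))) ∘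
      (fun s : ℝ => ap * (s + 1) / (ap + am)) := funext hI₁
  have d1 : deriv I₁ ρ =
      -(|ap - ap * x₁| ^ (-(1 : ℝ) / 2) * |x₁| ^ (-(γ / (γ + 1)))) * (ap / (ap + am)) := by
    rw [hI₁eq]; exact (hF₁.comp ρ hg₁).deriv
  -- derivative of I₂
  have hmeas2 : StronglyMeasurableAtFilter
      (fun ξ : ℝ => |am * ξ - ap| ^ (-(1 : ℝ) / 2) * |ξ| ^ (-(γ / (γ + 1)))) (nhds x₂) volume :=
    (Measurable.stronglyMeasurable (by fun_prop)).stronglyMeasurableAtFilter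
  have hcont2 : ContinuousAt
      (fun ξ : ℝ => |am * ξ - ap| ^ (-(1 : ℝ) / 2) * |ξ| ^ (-(γ / (γ + 1)))) x₂ := by
    apply ContinuousAt.mul
    · exact ContinuousAt.rpow_const (by fun_prop) (Or.inl (by simpa [abs_ne_zero] using hBne))
    · exact ContinuousAt.rpow_const (by fun_prop) (Or.inl (by simp [abs_ne_zero, hx₂pos.ne']))
  have hF₂ : HasDerivAt
      (fun u : ℝ => ∫ ξ in (ap / am)..u, |am * ξ - ap| ^ (-(1 : ℝ) / 2) * |ξ| ^ (-(γ / (γ + 1))))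
      (|am * x₂ - ap| ^ (-(1 : ℝ) / 2) * |x₂| ^ (-(γ / (γ + 1)))) x₂ :=
    integral_hasDerivAt_right (hint₂ ρ hρ) hmeas2 hcont2
  have hg₂ : HasDerivAt (fun s : ℝ => ap / (ap + am) * ((s + 1) / s))
      (ap / (ap + am) * (-(1 / ρ ^ 2))) ρ := by
    have h : HasDerivAt (fun s : ℝ => (s + 1) / s) ((1 * ρ - (ρ + 1) * 1) / ρ ^ 2) ρ :=
      ((hasDerivAt_id ρ).add_const 1).div (hasDerivAt_id ρ) hρpos.ne'
    have h2 := h.const_mul (ap / (ap + am))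
    exact h2.congr_deriv (by ring)
  have hI₂eq : I₂ = (fun u : ℝ => ∫ ξ in (ap / am)..u,
      |am * ξ - ap| ^ (-(1 : ℝ) / 2) * |ξ| ^ (-(γ / (γ + 1)))) ∘
      (fun s : ℝ => ap / (ap + am) * ((s + 1) / s)) := funext hI₂
  have d2 : deriv I₂ ρ =
      |am * x₂ - ap| ^ (-(1 : ℝ) / 2) * |x₂| ^ (-(γ / (γ + 1))) *
        (ap / (ap + am) * (-(1 / ρ ^ 2))) := by
    rw [hI₂eq]; exact (hF₂.comp ρ hg₂).deriv
  rw [d1, d2, hB, hx2]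
  have habs1 : |(ap - ap * x₁) / ρ| ^ (-(1 : ℝ) / 2) =
      |ap - ap * x₁| ^ (-(1 : ℝ) / 2) * ρ ^ ((1 : ℝ) / 2) := by
    rw [abs_div, abs_of_pos hρpos, Real.div_rpow (abs_nonneg _) hρpos.le,
      div_eq_mul_inv, ← Real.rpow_neg hρpos.le]
    norm_num
  have habs2 : |x₁ / ρ| ^ (-(γ / (γ + 1))) =
      |x₁| ^ (-(γ / (γ + 1))) * ρ ^ (γ / (γ + 1)) := by
    rw [abs_div, abs_of_pos hρpos, Real.div_rpow (abs_nonneg _) hρpos.le,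
      div_eq_mul_inv, ← Real.rpow_neg hρpos.le, neg_neg]
  rw [habs1, habs2]
  have hpow : ρ ^ (-((γ + 3) / (2 * (γ + 1)))) =
      ρ ^ ((1 : ℝ) / 2) * ρ ^ (γ / (γ + 1)) / ρ ^ 2 := by
    rw [← Real.rpow_add hρpos, ← Real.rpow_natCast ρ 2, ← Real.rpow_sub hρpos]
    congr 1
    push_cast
    field_simp
    ring
  rw [hpow]
  have h2 : (ρ:ℝ) ^ 2 ≠ 0 := pow_ne_zero 2 hρpos.ne'
  field_simp
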